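/- Value restriction implies the Condorcet property: let A be a finite set and D a set of linear orders on A such that for every 3-element subset T of A there exist x ∈ T and a position r ∈ {1,2,3} such that no order in D ranks x in position r among the elements of T. Then D is a Condorcet domain: every profile consisting of an odd number of orders from D has a transitive strict pairwise majority relation. -/

import Mathlib

open Set

/-- `r` is a (strict) linear order: irreflexive, transitive and total. -/
def IsLinOrder {A : Type*} (r : A → A → Prop) : Prop :=
  IsStrictTotalOrder A r

/-- Strict pairwise majority relation of a profile `P` of `m` orders:
`a` is majority-preferred to `b` if more orders in the profile rank `a` above `b`
than rank `b` above `a`. -/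
def MajPrefers {A : Type*} {m : ℕ} (P : Fin m → (A → A → Prop)) (a b : A) : Prop :=
  Nat.card {i : Fin m // P i a b} > Nat.card {i : Fin m // P i b a}

/-- `D` is a Condorcet domain: every profile of an odd number of (not necessarily
distinct) orders from `D` has a transitive strict pairwise majority relation. -/
def IsCondorcet {A : Type*} (D : Set (A → A → Prop)) : Prop :=
  ∀ (m : ℕ) (P : Fin m → (A → A → Prop)), Odd m → (∀ i, P i ∈ D) →
    Transitive (MajPrefers P)

/-- `D` is a maximal Condorcet domain: it is Condorcet, and no set of linear
orders strictly containing it is Condorcet. -/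
def IsMaximalCondorcet {A : Type*} (D : Set (A → A → Prop)) : Prop :=
  IsCondorcet D ∧
    ∀ D' : Set (A → A → Prop), (∀ r ∈ D', IsLinOrder r) → D ⊂ D' → ¬ IsCondorcet D'

/-- Never-top condition for `x` on the triple `T`: no order in `D` ranks `x`
above both other elements of `T`. -/
def NeverTop {A : Type*} (D : Set (A → A → Prop)) (T : Finset A) (x : A) : Prop :=
  ∀ p ∈ D, ¬ (∀ y ∈ T, y ≠ x → p x y)

/-- Never-bottom condition for `x` on the triple `T`: no order in `D` ranks `x`
below both other elements of `T`. -/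
def NeverBottom {A : Type*} (D : Set (A → A → Prop)) (T : Finset A) (x : A) : Prop :=
  ∀ p ∈ D, ¬ (∀ y ∈ T, y ≠ x → p y x)

/-- Never-middle condition for `x` on the triple `T`: no order in `D` ranks `x`
between the two other elements of `T`. -/
def NeverMiddle {A : Type*} (D : Set (A → A → Prop)) (T : Finset A) (x : A) : Prop :=
  ∀ p ∈ D, ¬ (∃ y ∈ T, ∃ z ∈ T, y ≠ x ∧ z ≠ x ∧ p y x ∧ p x z)

/-- `D` is peak-pit: every triple has an alternative that is never-top or never-bottom. -/
def IsPeakPit {A : Type*} (D : Set (A → A → Prop)) : Prop :=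
  ∀ T : Finset A, T.card = 3 → ∃ x ∈ T, NeverTop D T x ∨ NeverBottom D T x

/-- `D` is Arrow's single-peaked: every triple has a never-bottom alternative. -/
def IsArrowSP {A : Type*} (D : Set (A → A → Prop)) : Prop :=
  ∀ T : Finset A, T.card = 3 → ∃ x ∈ T, NeverBottom D T x

/-- `D` has maximal width: it contains two completely reversed linear orders. -/
def HasMaximalWidth {A : Type*} (D : Set (A → A → Prop)) : Prop :=
  ∃ p ∈ D, (fun a b => p b a) ∈ D

/-- A generalised arrangement of `n` pseudolines: continuous functions on `[0,1]`,
starting (at `0`) in strictly decreasing order of index, ending (at `1`) at pairwise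
distinct values; every two of them intersect in a finite set of interior points, at
each of which their difference changes sign; and no three share a common point. -/
structure GenArrangement (n : ℕ) where
  line : Fin n → ℝ → ℝ
  continuous : ∀ i, ContinuousOn (line i) (Set.Icc (0:ℝ) 1)
  start_anti : ∀ i j : Fin n, i < j → line j 0 < line i 0
  end_distinct : ∀ i j : Fin n, i ≠ j → line i 1 ≠ line j 1
  inter_finite : ∀ i j : Fin n, i ≠ j →
    {x : ℝ | x ∈ Set.Ioo (0:ℝ) 1 ∧ line i x = line j x}.Finite
  sign_change : ∀ i j : Fin n, i ≠ j → ∀ x ∈ Set.Ioo (0:ℝ) 1, line i x = line j x →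
    ∃ ε > 0, Set.Ioo (x - ε) (x + ε) ⊆ Set.Ioo (0:ℝ) 1 ∧
      ∀ y ∈ Set.Ioo (x - ε) x, ∀ z ∈ Set.Ioo x (x + ε),
        (line i y - line j y) * (line i z - line j z) < 0
  no_triple : ∀ i j k : Fin n, i ≠ j → j ≠ k → i ≠ k → ∀ x ∈ Set.Icc (0:ℝ) 1,
    ¬ (line i x = line j x ∧ line j x = line k x)

namespace GenArrangement

/-- The set `Z(i,j)` of interior intersection points of pseudolines `i` and `j`. -/
def Z {n : ℕ} (g : GenArrangement n) (i j : Fin n) : Set ℝ :=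
  {x : ℝ | x ∈ Set.Ioo (0:ℝ) 1 ∧ g.line i x = g.line j x}

/-- The level of an intersection point `x ∈ Z(i,j)`: the number of indices
`k ∉ {i,j}` with `f k x > f i x`. -/
noncomputable def level {n : ℕ} (g : GenArrangement n) (i j : Fin n) (x : ℝ) : ℕ :=
  Nat.card {k : Fin n // k ≠ i ∧ k ≠ j ∧ g.line i x < g.line k x}

/-- `g` is tame: for every pair of pseudolines, all their intersection points
are at the same level. -/
def Tame {n : ℕ} (g : GenArrangement n) : Prop :=
  ∀ i j : Fin n, i ≠ j → ∀ x₁ ∈ g.Z i j, ∀ x₂ ∈ g.Z i j,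
    g.level i j x₁ = g.level i j x₂

/-- `g` is a classical (simple) arrangement: every two pseudolines cross exactly once. -/
def IsClassical {n : ℕ} (g : GenArrangement n) : Prop :=
  ∀ i j : Fin n, i ≠ j → ∃ x : ℝ, g.Z i j = {x}

/-- `S` is a chamber set of `g`: for some `x ∈ [0,1]` and level `y` avoiding all
the lines, `S` is the set of lines passing above the point `(x, y)`. -/
def IsChamberSet {n : ℕ} (g : GenArrangement n) (S : Set (Fin n)) : Prop :=
  ∃ x ∈ Set.Icc (0:ℝ) 1, ∃ y : ℝ, (∀ i, g.line i x ≠ y) ∧ S = {i : Fin n | y < g.line i x}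

/-- The domain `D(g)`: all linear orders on `Fin n` all of whose prefix sets
(equivalently, all of whose upward closed sets) are chamber sets of `g`. -/
def domain {n : ℕ} (g : GenArrangement n) : Set (Fin n → Fin n → Prop) :=
  {r | IsLinOrder r ∧
    ∀ S : Set (Fin n), (∀ a ∈ S, ∀ b, r b a → b ∈ S) → g.IsChamberSet S}

end GenArrangement

/-- `t` is the top element of the order `p`. -/
def IsTopOf {A : Type*} (p : A → A → Prop) (t : A) : Prop :=
  ∀ y, y ≠ t → p t y

/-- `p` is single-peaked with respect to the axis `ax`: whenever `a` lies strictly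
between `b` and the top of `p` on the axis, `p` ranks `a` above `b`. -/
def SinglePeakedWRT {A : Type*} (ax p : A → A → Prop) : Prop :=
  ∀ t, IsTopOf p t → ∀ a b, ((ax b a ∧ ax a t) ∨ (ax t a ∧ ax a b)) → p a b

/-- The linear order determined by a list, ranking `a` above `b` iff `a` occurs
earlier in the list. -/
def ofList {A : Type*} [DecidableEq A] (l : List A) (a b : A) : Prop :=
  l.idxOf a < l.idxOf b

/-- The domain `D_{4,2}` of eight linear orders on `{1,2,3,4}` (represented as
`Fin 4`, with alternative `i+1` encoded as `i`): 1234, 2134, 2314, 3214, 2341,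
3241, 2431, 4231. -/
def D42 : Set (Fin 4 → Fin 4 → Prop) :=
  {ofList [0,1,2,3], ofList [1,0,2,3], ofList [1,2,0,3], ofList [2,1,0,3],
   ofList [1,2,3,0], ofList [2,1,3,0], ofList [1,3,2,0], ofList [3,1,2,0]}

/-- The domain `D_{3,1}` of four linear orders on `{1,2,3}` (represented as `Fin 3`,
with alternative `i+1` encoded as `i`): 123, 213, 231, 321. -/
def D31 : Set (Fin 3 → Fin 3 → Prop) :=
  {ofList [0,1,2], ofList [1,0,2], ofList [1,2,0], ofList [2,1,0]}

private lemma natCard_le_of_imp {m : ℕ} {p q : Fin m → Prop} (h : ∀ i, p i → q i) :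
    Nat.card {i // p i} ≤ Nat.card {i // q i} := by
  classical
  simp only [Nat.card_eq_fintype_card]
  exact Fintype.card_subtype_mono p q h

private lemma natCard_add_compl {m : ℕ} (p : Fin m → Prop) :
    Nat.card {i // p i} + Nat.card {i // ¬ p i} = m := by
  classical
  simp only [Nat.card_eq_fintype_card]
  rw [Fintype.card_subtype_compl]
  have h1 := Fintype.card_subtype_le p
  simp only [Fintype.card_fin] at h1 ⊢
  omega

private lemma count_pair {A : Type*} {m : ℕ} (P : Fin m → (A → A → Prop))
    (hP : ∀ i, IsStrictTotalOrder A (P i)) (a b : A) (hab : a ≠ b) :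
    Nat.card {i : Fin m // P i a b} + Nat.card {i : Fin m // P i b a} = m := by
  have h : ∀ i : Fin m, P i b a ↔ ¬ P i a b := by
    intro i
    haveI := hP i
    constructor
    · intro h1 h2
      exact irrefl_of (P i) a (trans_of (P i) h2 h1)
    · intro h1
      rcases trichotomous_of (P i) a b with h | h | h
      · exact absurd h h1
      · exact absurd h hab
      · exact h
  have : Nat.card {i : Fin m // P i b a} = Nat.card {i : Fin m // ¬ P i a b} :=
    Nat.card_congr (Equiv.subtypeEquivRight h)
  rw [this]
  exact natCard_add_compl _

private lemma exists_of_counts {m : ℕ} {p q : Fin m → Prop}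
    (h : m < Nat.card {i // p i} + Nat.card {i // q i}) : ∃ i, p i ∧ q i := by
  by_contra hc
  push_neg at hc
  have h1 : ∀ i, q i → ¬ p i := fun i hq hp => hc i hp hq
  have h2 := natCard_le_of_imp h1
  have h3 := natCard_add_compl p
  omega

private lemma core_cycle {A : Type*} {m : ℕ} (P : Fin m → (A → A → Prop))
    (hP : ∀ i, IsStrictTotalOrder A (P i)) (a b c : A)
    (hab : a ≠ b) (hbc : b ≠ c) (hac : a ≠ c)
    (h1 : MajPrefers P a b) (h2 : MajPrefers P b c) (h3 : MajPrefers P c a)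
    (hx : (∀ i, ¬ (P i a b ∧ P i a c)) ∨
          ((∀ i, ¬ (P i b a ∧ P i a c)) ∧ (∀ i, ¬ (P i c a ∧ P i a b))) ∨
          (∀ i, ¬ (P i b a ∧ P i c a))) : False := by
  unfold MajPrefers at h1 h2 h3
  have Sab := count_pair P hP a b hab
  have Sbc := count_pair P hP b c hbc
  have Sac := count_pair P hP a c hac
  rcases hx with hnt | ⟨hnm1, hnm2⟩ | hnb
  · -- never top
    have hsub : ∀ i, P i a b → P i c b := by
      intro i hiab
      haveI := hP i
      have hica : P i c a := by
        rcases trichotomous_of (P i) a c with h | h | h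
        · exact absurd ⟨hiab, h⟩ (hnt i)
        · exact absurd h hac
        · exact h
      exact trans_of (P i) hica hiab
    have hle := natCard_le_of_imp hsub
    omega
  · -- never middle
    have e1 : ∀ i, P i a b → P i a c := by
      intro i hiab
      haveI := hP i
      rcases trichotomous_of (P i) a c with h | h | h
      · exact h
      · exact absurd h hac
      · exact absurd ⟨h, hiab⟩ (hnm2 i)
    have e2 : ∀ i, P i a c → P i a b := by
      intro i hiac
      haveI := hP i
      rcases trichotomous_of (P i) a b with h | h | h
      · exact h
      · exact absurd h hab
      · exact absurd ⟨h, hiac⟩ (hnm1 i)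
    have heq : Nat.card {i : Fin m // P i a b} = Nat.card {i : Fin m // P i a c} :=
      le_antisymm (natCard_le_of_imp e1) (natCard_le_of_imp e2)
    omega
  · -- never bottom
    obtain ⟨i, hibc, hica⟩ : ∃ i, P i b c ∧ P i c a := exists_of_counts (by omega)
    haveI := hP i
    exact hnb i ⟨trans_of (P i) hibc hica, hica⟩

/-- value restriction implies the Condorcet property: if every
triple has an alternative that is never in some fixed position (top, middle, or
bottom) of the triple across `D`, then `D` is a Condorcet domain. -/
theorem valueRestriction_condorcet {A : Type*} [Fintype A]
    (D : Set (A → A → Prop)) (hD : ∀ r ∈ D, IsLinOrder r)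
    (hvr : ∀ T : Finset A, T.card = 3 →
      ∃ x ∈ T, NeverTop D T x ∨ NeverMiddle D T x ∨ NeverBottom D T x) :
    IsCondorcet D := by
  classical
  intro m P hm hPD a b c h1 h2
  have hP : ∀ i, IsStrictTotalOrder A (P i) := fun i => hD (P i) (hPD i)
  have hab : a ≠ b := by
    rintro rfl
    exact lt_irrefl _ h1
  have hbc : b ≠ c := by
    rintro rfl
    exact lt_irrefl _ h2
  by_cases hACeq : a = c
  · subst hACeq
    exact absurd h2 (lt_asymm h1)
  have hac : a ≠ c := hACeq
  by_contra h3'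
  have Sac := count_pair P hP a c hac
  obtain ⟨k, hk⟩ := hm
  have h3 : MajPrefers P c a := by
    unfold MajPrefers at h3' ⊢
    omega
  have hT3 : ({a, b, c} : Finset A).card = 3 :=
    Finset.card_eq_three.mpr ⟨a, b, c, hab, hac, hbc, rfl⟩
  obtain ⟨x, hxT, hcond⟩ := hvr {a, b, c} hT3
  have hmemb : ∀ y : A, y ∈ ({a, b, c} : Finset A) ↔ (y = a ∨ y = b ∨ y = c) := by
    intro y; simp [Finset.mem_insert]
  rcases (hmemb x).mp hxT with hxe | hxe | hxe <;> rw [hxe] at hcond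
  · -- x = a
    refine core_cycle P hP a b c hab hbc hac h1 h2 h3 ?_
    rcases hcond with hnt | hnm | hnb
    · left
      rintro i ⟨u, v⟩
      refine hnt (P i) (hPD i) ?_
      intro y hy hyne
      rcases (hmemb y).mp hy with rfl | rfl | rfl
      · exact absurd rfl hyne
      · exact u
      · exact v
    · right; left
      constructor
      · rintro i ⟨u, v⟩
        exact hnm (P i) (hPD i) ⟨b, (hmemb b).mpr (Or.inr (Or.inl rfl)),
          c, (hmemb c).mpr (Or.inr (Or.inr rfl)), hab.symm, hac.symm, u, v⟩
      · rintro i ⟨u, v⟩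
        exact hnm (P i) (hPD i) ⟨c, (hmemb c).mpr (Or.inr (Or.inr rfl)),
          b, (hmemb b).mpr (Or.inr (Or.inl rfl)), hac.symm, hab.symm, u, v⟩
    · right; right
      rintro i ⟨u, v⟩
      refine hnb (P i) (hPD i) ?_
      intro y hy hyne
      rcases (hmemb y).mp hy with rfl | rfl | rfl
      · exact absurd rfl hyne
      · exact u
      · exact v
  · -- x = b
    refine core_cycle P hP b c a hbc hac.symm hab.symm h2 h3 h1 ?_
    rcases hcond with hnt | hnm | hnb
    · left
      rintro i ⟨u, v⟩
      refine hnt (P i) (hPD i) ?_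
      intro y hy hyne
      rcases (hmemb y).mp hy with rfl | rfl | rfl
      · exact v
      · exact absurd rfl hyne
      · exact u
    · right; left
      constructor
      · rintro i ⟨u, v⟩
        exact hnm (P i) (hPD i) ⟨c, (hmemb c).mpr (Or.inr (Or.inr rfl)),
          a, (hmemb a).mpr (Or.inl rfl), hbc.symm, hab, u, v⟩
      · rintro i ⟨u, v⟩
        exact hnm (P i) (hPD i) ⟨a, (hmemb a).mpr (Or.inl rfl),
          c, (hmemb c).mpr (Or.inr (Or.inr rfl)), hab, hbc.symm, u, v⟩
    · right; right
      rintro i ⟨u, v⟩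
      refine hnb (P i) (hPD i) ?_
      intro y hy hyne
      rcases (hmemb y).mp hy with rfl | rfl | rfl
      · exact v
      · exact absurd rfl hyne
      · exact u
  · -- x = c
    refine core_cycle P hP c a b hac.symm hab hbc.symm h3 h1 h2 ?_
    rcases hcond with hnt | hnm | hnb
    · left
      rintro i ⟨u, v⟩
      refine hnt (P i) (hPD i) ?_
      intro y hy hyne
      rcases (hmemb y).mp hy with rfl | rfl | rfl
      · exact u
      · exact v
      · exact absurd rfl hyne
    · right; left
      constructor
      · rintro i ⟨u, v⟩
        exact hnm (P i) (hPD i) ⟨a, (hmemb a).mpr (Or.inl rfl),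
          b, (hmemb b).mpr (Or.inr (Or.inl rfl)), hac, hbc, u, v⟩
      · rintro i ⟨u, v⟩
        exact hnm (P i) (hPD i) ⟨b, (hmemb b).mpr (Or.inr (Or.inl rfl)),
          a, (hmemb a).mpr (Or.inl rfl), hbc, hac, u, v⟩
    · right; right
      rintro i ⟨u, v⟩
      refine hnb (P i) (hPD i) ?_
      intro y hy hyne
      rcases (hmemb y).mp hy with rfl | rfl | rfl
      · exact u
      · exact v
      · exact absurd rfl hyne
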